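/- Let G be a finite simple graph on vertex set {1,...,d}, and for an edge e=(i,j) let ρ(e)=e_i+e_j ∈ ℝ^d. For two distinct edges e and f of G, the segment conv{ρ(e),ρ(f)} is an edge (1-dimensional face) of the edge polytope P_G if and only if e and f are not cycle-compatible, i.e., there is no 4-cycle in the subgraph of G induced by the union of the vertex sets of e and f. -/

import Mathlib

open scoped BigOperators

/-- `ρ(i,j) = e_i + e_j` -/
noncomputable def rho {d : ℕ} (i j : Fin d) : Fin d → ℝ :=
  fun t => (if t = i then 1 else 0) + (if t = j then 1 else 0)

/-- The edge polytope of a graph `G` on `[d]`. -/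
noncomputable def edgePolytope {d : ℕ} (G : SimpleGraph (Fin d)) : Set (Fin d → ℝ) :=
  convexHull ℝ {x | ∃ i j, G.Adj i j ∧ x = rho i j}

/-- dot product -/
def dotp {d : ℕ} (a x : Fin d → ℝ) : ℝ := ∑ t, a t * x t

/-- a polytope is integral if all its vertices (extreme points) are lattice points -/
def IsIntegralSet {d : ℕ} (P : Set (Fin d → ℝ)) : Prop :=
  ∀ x ∈ Set.extremePoints ℝ P, ∀ t, ∃ z : ℤ, x t = (z : ℝ)

/-- The hyperplane `a·x = b` decomposes `P`: it meets the relative interior of `P`,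
both open sides meet `P`, and both closed half-space pieces are integral. -/
def Decomposes {d : ℕ} (P : Set (Fin d → ℝ)) (a : Fin d → ℝ) (b : ℝ) : Prop :=
  (∃ x ∈ intrinsicInterior ℝ P, dotp a x = b) ∧
  (∃ y ∈ P, dotp a y < b) ∧ (∃ y ∈ P, b < dotp a y) ∧
  IsIntegralSet (P ∩ {x | b ≤ dotp a x}) ∧
  IsIntegralSet (P ∩ {x | dotp a x ≤ b})

/-- Edges  and  of  are cycle-compatible: they are vertex-disjoint and
there is a 4-cycle in the subgraph induced on their four vertices. -/
def CycleCompatible {d : ℕ} (G : SimpleGraph (Fin d)) (i j k l : Fin d) : Prop :=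
  (({i, j} : Set (Fin d)) ∩ {k, l} = ∅) ∧
  ∃ p q r s : Fin d, ({p, q, r, s} : Set (Fin d)) = {i, j, k, l} ∧
    G.Adj p q ∧ G.Adj q r ∧ G.Adj r s ∧ G.Adj s p

section Helpers
variable {d : ℕ}

lemma rho_symm (i j : Fin d) : rho i j = rho j i := by
  funext t; simp [rho, add_comm]

lemma dotp_rho (a : Fin d → ℝ) (s t : Fin d) : dotp a (rho s t) = a s + a t := by
  simp [dotp, rho, mul_add, Finset.sum_add_distrib, mul_ite, Finset.sum_ite_eq']

lemma rho_inj {i j k l : Fin d} (hij : i ≠ j) (hkl : k ≠ l) (h : rho i j = rho k l) :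
    (i = k ∧ j = l) ∨ (i = l ∧ j = k) := by
  have hi := congrFun h i
  have hj := congrFun h j
  simp only [rho] at hi hj
  by_cases h1 : i = k <;> by_cases h2 : i = l <;> by_cases h3 : j = k <;> by_cases h4 : j = l <;>
    simp_all

noncomputable def dlin {d : ℕ} (a : Fin d → ℝ) : (Fin d → ℝ) →L[ℝ] ℝ :=
  LinearMap.toContinuousLinearMap
    { toFun := dotp a
      map_add' := fun x y => by
        simp [dotp, mul_add, Finset.sum_add_distrib]
      map_smul' := fun c x => by
        simp only [dotp, Pi.smul_apply, smul_eq_mul, RingHom.id_apply, Finset.mul_sum]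
        exact Finset.sum_congr rfl fun t _ => by ring }

lemma dlin_apply (a x : Fin d → ℝ) : dlin a x = dotp a x := rfl

end Helpers

lemma exposed_of_weights {d : ℕ} (G : SimpleGraph (Fin d)) (i j k l : Fin d)
    (hij : G.Adj i j) (hkl : G.Adj k l) (a : Fin d → ℝ)
    (hb : a k + a l = a i + a j)
    (hle : ∀ s t, G.Adj s t → a s + a t ≤ a i + a j)
    (heq : ∀ s t, G.Adj s t → a s + a t = a i + a j →
      rho s t = rho i j ∨ rho s t = rho k l) :
    IsExposed ℝ (edgePolytope G) (segment ℝ (rho i j) (rho k l)) := by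
  intro _
  set b : ℝ := a i + a j with hbdef
  set V : Set (Fin d → ℝ) := {x | ∃ s t, G.Adj s t ∧ x = rho s t} with hV
  refine ⟨dlin a, ?_⟩
  have hVle : V ⊆ {y | dlin a y ≤ b} := by
    rintro y ⟨s, t, hst, rfl⟩
    simpa [dlin_apply, dotp_rho] using hle s t hst
  have hPle : ∀ y ∈ edgePolytope G, dlin a y ≤ b := by
    intro y hy
    exact convexHull_min hVle (convex_halfSpace_le ((dlin a).toLinearMap.isLinear) b) hy
  have heP : rho i j ∈ edgePolytope G := subset_convexHull ℝ V ⟨i, j, hij, rfl⟩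
  have hfP : rho k l ∈ edgePolytope G := subset_convexHull ℝ V ⟨k, l, hkl, rfl⟩
  have hle' : dlin a (rho i j) = b := by rw [dlin_apply, dotp_rho]
  have hlf : dlin a (rho k l) = b := by rw [dlin_apply, dotp_rho]; exact hb
  ext x
  constructor
  · intro hx
    have hxP : x ∈ edgePolytope G :=
      (convex_convexHull ℝ V).segment_subset heP hfP hx
    refine ⟨hxP, ?_⟩
    obtain ⟨u, v, hu, hv, huv, rfl⟩ := hx
    have : dlin a (u • rho i j + v • rho k l) = b := by
      simp [map_add, map_smul, hle', hlf, smul_eq_mul, ← add_mul, huv]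
    rw [this]
    exact hPle
  · rintro ⟨hxP, hmax⟩
    have hxb : dlin a x = b := by
      refine le_antisymm (hPle x hxP) ?_
      have := hmax (rho i j) heP
      rwa [hle'] at this
    rw [edgePolytope, convexHull_eq] at hxP
    obtain ⟨ι, t, w, z, hw0, hw1, hz, hcm⟩ := hxP
    have hxsum : x = ∑ n ∈ t, w n • z n := by
      rw [← hcm, Finset.centerMass_eq_of_sum_1 _ _ hw1]
    have hlsum : ∑ n ∈ t, w n * (b - dlin a (z n)) = 0 := by
      have : dlin a x = ∑ n ∈ t, w n * dlin a (z n) := by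
        rw [hxsum, map_sum]
        exact Finset.sum_congr rfl fun n _ => by simp
      have h2 : ∑ n ∈ t, w n * b = b := by
        rw [← Finset.sum_mul, hw1, one_mul]
      calc ∑ n ∈ t, w n * (b - dlin a (z n))
          = (∑ n ∈ t, w n * b) - ∑ n ∈ t, w n * dlin a (z n) := by
            rw [← Finset.sum_sub_distrib]; exact Finset.sum_congr rfl fun n _ => by ring
        _ = b - dlin a x := by rw [h2, this]
        _ = 0 := by rw [hxb, sub_self]
    have hterm : ∀ n ∈ t, w n * (b - dlin a (z n)) = 0 :=
      (Finset.sum_eq_zero_iff_of_nonneg (fun n hn =>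
        mul_nonneg (hw0 n hn) (sub_nonneg.2 (hVle (hz n hn))))).1 hlsum
    classical
    have hmem : ∀ n ∈ t.filter (fun n => w n ≠ 0), z n ∈ ({rho i j, rho k l} : Set (Fin d → ℝ)) := by
      intro n hn
      rw [Finset.mem_filter] at hn
      obtain ⟨hn, hwn⟩ := hn
      have hzb : dlin a (z n) = b := by
        have := hterm n hn
        rcases mul_eq_zero.1 this with h | h
        · exact absurd h hwn
        · linarith [sub_eq_zero.1 h]
      obtain ⟨s, t', hst, hzeq⟩ := hz n hn
      rw [hzeq] at hzb ⊢
      rw [dlin_apply, dotp_rho] at hzb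
      rcases heq s t' hst hzb with h | h
      · exact Or.inl h
      · exact Or.inr h
    have hxseg : x ∈ convexHull ℝ ({rho i j, rho k l} : Set (Fin d → ℝ)) := by
      rw [← Finset.centerMass_filter_ne_zero (z := z)] at hcm
      rw [← hcm]
      refine Finset.centerMass_mem_convexHull _ (fun n hn => hw0 n (Finset.mem_filter.1 hn).1) ?_ hmem
      rw [Finset.sum_filter_ne_zero, hw1]
      exact one_pos
    rwa [convexHull_pair] at hxseg

lemma aux_shared {d : ℕ} (G : SimpleGraph (Fin d)) (v j l : Fin d)
    (hvj : G.Adj v j) (hvl : G.Adj v l) (hjl : j ≠ l) :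
    IsExposed ℝ (edgePolytope G) (segment ℝ (rho v j) (rho v l)) := by
  have hjv : j ≠ v := hvj.ne'
  have hlv : l ≠ v := hvl.ne'
  set a : Fin d → ℝ := fun t => if t = v then 2 else if t = j then 1 else if t = l then 1 else 0
    with ha
  have hav : a v = 2 := by simp [ha]
  have haj : a j = 1 := by simp [ha, hjv]
  have hal : a l = 1 := by simp [ha, hlv, hjl]
  apply exposed_of_weights G v j v l hvj hvl a
  · rw [hav, haj, hal]
  · intro s t hst
    have hstne : s ≠ t := hst.ne
    rw [hav, haj]
    simp only [ha]
    split_ifs <;>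
      first
        | (subst_vars; exact absurd rfl hstne)
        | norm_num
  · intro s t hst hsum
    have hstne : s ≠ t := hst.ne
    rw [hav, haj] at hsum
    simp only [ha] at hsum
    split_ifs at hsum <;>
      first
        | (subst_vars; first
            | exact absurd rfl hstne
            | exact Or.inl rfl
            | exact Or.inr rfl
            | exact Or.inl (rho_symm _ _)
            | exact Or.inr (rho_symm _ _))
        | norm_num at hsum

lemma aux_disjoint {d : ℕ} (G : SimpleGraph (Fin d)) (i j k l : Fin d)
    (hij : G.Adj i j) (hkl : G.Adj k l)
    (hik : i ≠ k) (hil : i ≠ l) (hjk : j ≠ k) (hjl : j ≠ l)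
    (h1 : ¬ G.Adj j k) (h2 : ¬ G.Adj j l) :
    IsExposed ℝ (edgePolytope G) (segment ℝ (rho i j) (rho k l)) := by
  have hji : j ≠ i := hij.ne'
  have hlk : l ≠ k := hkl.ne'
  set a : Fin d → ℝ := fun t =>
    if t = i then 1 else if t = j then 3 else if t = k then 2 else if t = l then 2 else 0 with ha
  have hai : a i = 1 := by simp [ha]
  have haj : a j = 3 := by simp [ha, hji]
  have hak : a k = 2 := by simp [ha, hik.symm, hjk.symm]
  have hal : a l = 2 := by simp [ha, hil.symm, hjl.symm, hlk]
  apply exposed_of_weights G i j k l hij hkl a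
  · rw [hai, haj, hak, hal]; norm_num
  · intro s t hst
    have hstne : s ≠ t := hst.ne
    rw [hai, haj]
    simp only [ha]
    split_ifs <;>
      first
        | (subst_vars; first
            | exact absurd rfl hstne
            | exact absurd hst h1
            | exact absurd hst h2
            | exact absurd hst.symm h1
            | exact absurd hst.symm h2)
        | norm_num
  · intro s t hst hsum
    have hstne : s ≠ t := hst.ne
    rw [hai, haj] at hsum
    simp only [ha] at hsum
    split_ifs at hsum <;>
      first
        | (subst_vars; first
            | exact absurd rfl hstne
            | exact absurd hst h1
            | exact absurd hst h2
            | exact absurd hst.symm h1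
            | exact absurd hst.symm h2
            | exact Or.inl rfl
            | exact Or.inr rfl
            | exact Or.inl (rho_symm _ _)
            | exact Or.inr (rho_symm _ _))
        | norm_num at hsum
lemma ind4 {d : ℕ} {u v w x : Fin d} (huv : u ≠ v) (huw : u ≠ w) (hux : u ≠ x)
    (hvw : v ≠ w) (hvx : v ≠ x) (hwx : w ≠ x) (t : Fin d) :
    (rho u v + rho w x) t = if t = u ∨ t = v ∨ t = w ∨ t = x then 1 else 0 := by
  simp only [Pi.add_apply, rho]
  by_cases h1 : t = u <;> by_cases h2 : t = v <;> by_cases h3 : t = w <;> by_cases h4 : t = x <;>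
    simp_all

lemma rho_add_eq {d : ℕ} {u v w x i j k l : Fin d}
    (hset : ({u, v, w, x} : Set (Fin d)) = {i, j, k, l})
    (huv : u ≠ v) (huw : u ≠ w) (hux : u ≠ x) (hvw : v ≠ w) (hvx : v ≠ x) (hwx : w ≠ x)
    (hij : i ≠ j) (hik : i ≠ k) (hil : i ≠ l) (hjk : j ≠ k) (hjl : j ≠ l) (hkl : k ≠ l) :
    rho u v + rho w x = rho i j + rho k l := by
  funext t
  have ht : (t = u ∨ t = v ∨ t = w ∨ t = x) ↔ (t = i ∨ t = j ∨ t = k ∨ t = l) := by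
    have := Set.ext_iff.1 hset t
    simpa using this
  rw [ind4 huv huw hux hvw hvx hwx, ind4 hij hik hil hjk hjl hkl, if_congr ht rfl rfl]

lemma four_distinct {d : ℕ} {p q r s i j k l : Fin d}
    (hset : ({p, q, r, s} : Set (Fin d)) = {i, j, k, l})
    (hij : i ≠ j) (hik : i ≠ k) (hil : i ≠ l) (hjk : j ≠ k) (hjl : j ≠ l) (hkl : k ≠ l) :
    p ≠ r ∧ q ≠ s := by
  constructor
  · rintro rfl
    have hi : i ∈ ({p, q, p, s} : Set (Fin d)) := by rw [hset]; simp
    have hj : j ∈ ({p, q, p, s} : Set (Fin d)) := by rw [hset]; simp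
    have hk : k ∈ ({p, q, p, s} : Set (Fin d)) := by rw [hset]; simp
    have hl : l ∈ ({p, q, p, s} : Set (Fin d)) := by rw [hset]; simp
    simp only [Set.mem_insert_iff, Set.mem_singleton_iff] at hi hj hk hl
    rcases hi with rfl | rfl | rfl | rfl <;> rcases hj with rfl | rfl | rfl | rfl <;>
      rcases hk with rfl | rfl | rfl | rfl <;> rcases hl with rfl | rfl | rfl | rfl <;>
        simp_all
  · rintro rfl
    have hi : i ∈ ({p, q, r, q} : Set (Fin d)) := by rw [hset]; simp
    have hj : j ∈ ({p, q, r, q} : Set (Fin d)) := by rw [hset]; simp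
    have hk : k ∈ ({p, q, r, q} : Set (Fin d)) := by rw [hset]; simp
    have hl : l ∈ ({p, q, r, q} : Set (Fin d)) := by rw [hset]; simp
    simp only [Set.mem_insert_iff, Set.mem_singleton_iff] at hi hj hk hl
    rcases hi with rfl | rfl | rfl | rfl <;> rcases hj with rfl | rfl | rfl | rfl <;>
      rcases hk with rfl | rfl | rfl | rfl <;> rcases hl with rfl | rfl | rfl | rfl <;>
        simp_all

lemma no_good_pair {d : ℕ} {G : SimpleGraph (Fin d)} {i j k l u v w x : Fin d}
    (hij : G.Adj i j) (hkl : G.Adj k l)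
    (hexp : IsExposed ℝ (edgePolytope G) (segment ℝ (rho i j) (rho k l)))
    (huv : G.Adj u v) (hwx : G.Adj w x)
    (hsum : rho u v + rho w x = rho i j + rho k l)
    (hne1 : rho u v ≠ rho i j) (hne2 : rho u v ≠ rho k l)
    (hik : i ≠ k) (hil : i ≠ l) : False := by
  obtain ⟨L, hface⟩ := hexp ⟨_, left_mem_segment ℝ _ _⟩
  have heP : rho i j ∈ edgePolytope G := subset_convexHull ℝ _ ⟨i, j, hij, rfl⟩
  have hfP : rho k l ∈ edgePolytope G := subset_convexHull ℝ _ ⟨k, l, hkl, rfl⟩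
  have huvP : rho u v ∈ edgePolytope G := subset_convexHull ℝ _ ⟨u, v, huv, rfl⟩
  have hwxP : rho w x ∈ edgePolytope G := subset_convexHull ℝ _ ⟨w, x, hwx, rfl⟩
  set m : Fin d → ℝ := (1/2 : ℝ) • rho i j + (1/2 : ℝ) • rho k l with hm
  have hmseg : m ∈ segment ℝ (rho i j) (rho k l) :=
    ⟨1/2, 1/2, by norm_num, by norm_num, by norm_num, rfl⟩
  rw [hface] at hmseg
  obtain ⟨hmP, hmmax⟩ := hmseg
  have e1 : L (rho u v) + L (rho w x) = L (rho i j) + L (rho k l) := by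
    rw [← map_add, ← map_add, hsum]
  have e2 : L m = (1/2) * L (rho i j) + (1/2) * L (rho k l) := by
    rw [hm, map_add, map_smul, map_smul]; norm_num
  have h5 : L (rho u v) ≤ L m := hmmax _ huvP
  have h6 : L (rho w x) ≤ L m := hmmax _ hwxP
  have hLuv : L (rho u v) = L m := by linarith
  have huvseg : rho u v ∈ segment ℝ (rho i j) (rho k l) := by
    rw [hface]
    exact ⟨huvP, fun y hy => by rw [hLuv]; exact hmmax y hy⟩
  obtain ⟨c1, c2, hc1, hc2, hc12, hz⟩ := huvseg
  have hcoord := congrFun hz i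
  have hone : rho i j i = 1 := by simp [rho, hij.ne]
  have hzero : rho k l i = 0 := by simp [rho, hik, hil]
  simp only [Pi.add_apply, Pi.smul_apply, smul_eq_mul, hone, hzero] at hcoord
  have hrw : rho u v i = (if i = u then (1:ℝ) else 0) + (if i = v then 1 else 0) := rfl
  have hval : rho u v i = 0 ∨ rho u v i = 1 := by
    by_cases h1 : i = u <;> by_cases h2 : i = v
    · exact absurd (h1.symm.trans h2) huv.ne
    · right; rw [hrw, if_pos h1, if_neg h2]; norm_num
    · right; rw [hrw, if_neg h1, if_pos h2]; norm_num
    · left; rw [hrw, if_neg h1, if_neg h2]; norm_num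
  rcases hval with h | h
  · have hc10 : c1 = 0 := by rw [h] at hcoord; linarith
    have hc21 : c2 = 1 := by linarith
    apply hne2
    rw [← hz, hc10, hc21]
    simp
  · have hc11 : c1 = 1 := by rw [h] at hcoord; linarith
    have hc20 : c2 = 0 := by linarith
    apply hne1
    rw [← hz, hc11, hc20]
    simp

/-- for distinct edges e=(i,j), f=(k,l) of G, conv{ρ(e),ρ(f)} is an edge
(1-dimensional face) of the edge polytope iff e and f are not cycle-compatible. -/
theorem stmt0 {d : ℕ} (G : SimpleGraph (Fin d)) (i j k l : Fin d)
    (hij : G.Adj i j) (hkl : G.Adj k l)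
    (hne : ({i, j} : Set (Fin d)) ≠ {k, l}) :
    (rho i j ≠ rho k l ∧
      IsExposed ℝ (edgePolytope G) (segment ℝ (rho i j) (rho k l))) ↔
    ¬ CycleCompatible G i j k l := by
  have hij' : i ≠ j := hij.ne
  have hkl' : k ≠ l := hkl.ne
  have hrne : rho i j ≠ rho k l := by
    intro h
    rcases rho_inj hij' hkl' h with ⟨h1, h2⟩ | ⟨h1, h2⟩
    · exact hne (by rw [h1, h2])
    · exact hne (by rw [h1, h2, Set.pair_comm])
  constructor
  · rintro ⟨-, hexp⟩ ⟨hdisj, p, q, r, s, hset, h1, h2, h3, h4⟩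
    have hmem : ∀ z : Fin d, z ∈ ({i, j} : Set (Fin d)) → z ∈ ({k, l} : Set (Fin d)) → False := by
      intro z hz1 hz2
      exact Set.eq_empty_iff_forall_notMem.1 hdisj z ⟨hz1, hz2⟩
    have hik : i ≠ k := fun h => hmem i (by simp) (by simp [h])
    have hil : i ≠ l := fun h => hmem i (by simp) (by simp [h])
    have hjk : j ≠ k := fun h => hmem j (by simp) (by simp [h])
    have hjl : j ≠ l := fun h => hmem j (by simp) (by simp [h])
    have hpq : p ≠ q := h1.ne
    have hqr : q ≠ r := h2.ne
    have hrs : r ≠ s := h3.ne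
    have hsp : s ≠ p := h4.ne
    obtain ⟨hpr, hqs⟩ := four_distinct hset hij' hik hil hjk hjl hkl'
    have hset2 : ({q, r, s, p} : Set (Fin d)) = {i, j, k, l} := by
      rw [← hset]; ext y; simp; tauto
    have hsum2 : rho q r + rho s p = rho i j + rho k l :=
      rho_add_eq hset2 hqr hqs hpq.symm hrs hpr.symm hsp hij' hik hil hjk hjl hkl'
    by_cases hA : rho p q = rho i j
    · rcases rho_inj hpq hij' hA with ⟨hpi, hqj⟩ | ⟨hpj, hqi⟩
      · refine no_good_pair hij hkl hexp h2 h4 hsum2 ?_ ?_ hik hil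
        · intro h
          rcases rho_inj hqr hij' h with ⟨h5, h6⟩ | ⟨h5, h6⟩
          · exact hij' (h5.symm.trans hqj)
          · exact hpr (hpi.trans h6.symm)
        · intro h
          rcases rho_inj hqr hkl' h with ⟨h5, h6⟩ | ⟨h5, h6⟩
          · exact hjk (hqj.symm.trans h5)
          · exact hjl (hqj.symm.trans h5)
      · refine no_good_pair hij hkl hexp h2 h4 hsum2 ?_ ?_ hik hil
        · intro h
          rcases rho_inj hqr hij' h with ⟨h5, h6⟩ | ⟨h5, h6⟩
          · exact hpr (hpj.trans h6.symm)
          · exact hij' (h5.symm.trans hqi).symm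
        · intro h
          rcases rho_inj hqr hkl' h with ⟨h5, h6⟩ | ⟨h5, h6⟩
          · exact hik (hqi.symm.trans h5)
          · exact hil (hqi.symm.trans h5)
    · by_cases hB : rho p q = rho k l
      · rcases rho_inj hpq hkl' hB with ⟨hpk, hql⟩ | ⟨hpl, hqk⟩
        · refine no_good_pair hij hkl hexp h2 h4 hsum2 ?_ ?_ hik hil
          · intro h
            rcases rho_inj hqr hij' h with ⟨h5, h6⟩ | ⟨h5, h6⟩
            · exact hil (h5.symm.trans hql)
            · exact hjl (h5.symm.trans hql)
          · intro h
            rcases rho_inj hqr hkl' h with ⟨h5, h6⟩ | ⟨h5, h6⟩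
            · exact hkl' (h5.symm.trans hql)
            · exact hpr (hpk.trans h6.symm)
        · refine no_good_pair hij hkl hexp h2 h4 hsum2 ?_ ?_ hik hil
          · intro h
            rcases rho_inj hqr hij' h with ⟨h5, h6⟩ | ⟨h5, h6⟩
            · exact hik (h5.symm.trans hqk)
            · exact hjk (h5.symm.trans hqk)
          · intro h
            rcases rho_inj hqr hkl' h with ⟨h5, h6⟩ | ⟨h5, h6⟩
            · exact hpr (hpl.trans h6.symm)
            · exact hkl' (hqk.symm.trans h5)
      · exact no_good_pair hij hkl hexp h1 h3
          (rho_add_eq hset hpq hpr hsp.symm hqr hqs hrs hij' hik hil hjk hjl hkl')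
          hA hB hik hil
  · intro hnc
    refine ⟨hrne, ?_⟩
    by_cases hd : ({i, j} : Set (Fin d)) ∩ {k, l} = ∅
    · -- disjoint case
      have hik : i ≠ k := fun h => Set.eq_empty_iff_forall_notMem.1 hd i ⟨by simp, by simp [h]⟩
      have hil : i ≠ l := fun h => Set.eq_empty_iff_forall_notMem.1 hd i ⟨by simp, by simp [h]⟩
      have hjk : j ≠ k := fun h => Set.eq_empty_iff_forall_notMem.1 hd j ⟨by simp, by simp [h]⟩
      have hjl : j ≠ l := fun h => Set.eq_empty_iff_forall_notMem.1 hd j ⟨by simp, by simp [h]⟩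
      have hcyc : ¬ ∃ p q r s : Fin d, ({p, q, r, s} : Set (Fin d)) = {i, j, k, l} ∧
          G.Adj p q ∧ G.Adj q r ∧ G.Adj r s ∧ G.Adj s p := fun hb => hnc ⟨hd, hb⟩
      have hA : ¬ G.Adj j k ∨ ¬ G.Adj i l := by
        by_contra h
        push_neg at h
        exact hcyc ⟨i, j, k, l, rfl, hij, h.1, hkl, h.2.symm⟩
      have hB : ¬ G.Adj j l ∨ ¬ G.Adj i k := by
        by_contra h
        push_neg at h
        refine hcyc ⟨i, j, l, k, ?_, hij, h.1, hkl.symm, h.2.symm⟩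
        ext y; simp; tauto
      rcases hA with ha | ha <;> rcases hB with hb | hb
      · exact aux_disjoint G i j k l hij hkl hik hil hjk hjl ha hb
      · -- ¬ jk, ¬ ik : k has no cross edges
        rw [rho_symm i j, rho_symm k l, segment_symm]
        exact aux_disjoint G l k j i hkl.symm hij.symm hjl.symm hil.symm hjk.symm hik.symm
          (fun h => ha h.symm) (fun h => hb h.symm)
      · -- ¬ il, ¬ jl : l has no cross edges
        rw [segment_symm]
        exact aux_disjoint G k l i j hkl hij hik.symm hjk.symm hil.symm hjl.symm
          (fun h => ha h.symm) (fun h => hb h.symm)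
      · -- ¬ il, ¬ ik : i has no cross edges
        rw [rho_symm i j]
        exact aux_disjoint G j i k l hij.symm hkl hjk hjl hik hil hb ha
    · -- shared vertex case
      obtain ⟨v, hv1, hv2⟩ := Set.nonempty_iff_ne_empty.2 hd
      simp only [Set.mem_insert_iff, Set.mem_singleton_iff] at hv1 hv2
      rcases hv1 with rfl | rfl <;> rcases hv2 with h | h
      · -- v = i, i = k
        subst h
        exact aux_shared G v j l hij hkl (fun h' => hne (by rw [h']))
      · -- v = i, i = l
        subst h
        rw [rho_symm k v]
        exact aux_shared G v j k hij hkl.symm (fun h' => hne (by rw [h', Set.pair_comm]))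
      · -- v = j, j = k
        subst h
        rw [rho_symm i v]
        exact aux_shared G v i l hij.symm hkl (fun h' => hne (by rw [h', Set.pair_comm]))
      · -- v = j, j = l
        subst h
        rw [rho_symm i v, rho_symm k v]
        exact aux_shared G v i k hij.symm hkl.symm (fun h' => hne (by rw [h']))
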